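/- Let w be a continuous weight on X whose associated weight m := m_w is admissible, and let U = (U_i)_{i∈I} and V = (V_i)_{i∈I} be moderate admissible coverings of X over the same index set, both satisfying the m-cover condition, which are m-equivalent, i.e.: (i) there are constants C₁, C₂ > 0 with C₁μ(U_i) ≤ μ(V_i) ≤ C₂μ(U_i) for all i, and (ii) sup_i sup_{x∈U_i, y∈V_i} m(x,y) ≤ C' < ∞. Then for each 1 ≤ p ≤ ∞ there are constants such that for all sequences (λ_i)_{i∈I} of nonnegative reals: ‖Σ_i λ_i χ_{U_i}‖_{L^p_w} is bounded above and below by constant multiples of ‖Σ_i λ_i χ_{V_i}‖_{L^p_w}, and ‖Σ_i λ_i μ(U_i)^{-1} χ_{U_i}‖_{L^p_w} is bounded above and below by constant multiples of ‖Σ_i λ_i μ(V_i)^{-1} χ_{V_i}‖_{L^p_w}. -/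

import Mathlib

open MeasureTheory ENNReal
open scoped ENNReal NNReal

noncomputable section

/-- The weight on `X × X` associated to a weight `w` on `X`. -/
def mw {X : Type*} (w : X → ℝ) (x y : X) : ℝ :=
  max (w x / w y) (w y / w x)

/-- A moderate admissible covering `U = (U_i)_{i∈I}` of `X`. -/
structure ModCover (X : Type*) [TopologicalSpace X] [MeasurableSpace X]
    (μ : MeasureTheory.Measure X) (I : Type*) where
  U : I → Set X
  measU : ∀ i, MeasurableSet (U i)
  relCompact : ∀ i, IsCompact (closure (U i))
  interiorNonempty : ∀ i, (interior (U i)).Nonempty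
  covers : (⋃ i, U i) = Set.univ
  N : ℕ
  overlapFin : ∀ j : I, {i : I | (U i ∩ U j).Nonempty}.Finite
  overlapBound : ∀ j : I, {i : I | (U i ∩ U j).Nonempty}.ncard ≤ N
  measLower : ℝ≥0∞
  measLowerPos : 0 < measLower
  lower : ∀ i, measLower ≤ μ (U i)
  finiteMeas : ∀ i, μ (U i) < ⊤
  Ctilde : ℝ≥0∞
  CtildeFin : Ctilde < ⊤
  moderate : ∀ i j, (U i ∩ U j).Nonempty → μ (U i) ≤ Ctilde * μ (U j)

namespace MEqCov

open Set

variable {X : Type*} [TopologicalSpace X] [MeasurableSpace X] {μ : Measure X} {I : Type*}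

lemma memSet_finite (𝒞 : ModCover X μ I) (x : X) : {i | x ∈ 𝒞.U i}.Finite := by
  have hx : x ∈ ⋃ i, 𝒞.U i := by rw [𝒞.covers]; trivial
  obtain ⟨j, hj⟩ := Set.mem_iUnion.1 hx
  exact (𝒞.overlapFin j).subset fun i hi => ⟨x, hi, hj⟩

/-- The finite set of indices whose patch contains `x`. -/
def sx (𝒞 : ModCover X μ I) (x : X) : Finset I := (memSet_finite 𝒞 x).toFinset

lemma mem_sx {𝒞 : ModCover X μ I} {x : X} {i : I} : i ∈ sx 𝒞 x ↔ x ∈ 𝒞.U i :=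
  (memSet_finite 𝒞 x).mem_toFinset

lemma card_sx_le (𝒞 : ModCover X μ I) (x : X) : (sx 𝒞 x).card ≤ 𝒞.N := by
  have hx : x ∈ ⋃ i, 𝒞.U i := by rw [𝒞.covers]; trivial
  obtain ⟨j, hj⟩ := Set.mem_iUnion.1 hx
  have hsub : {i | x ∈ 𝒞.U i} ⊆ {i | (𝒞.U i ∩ 𝒞.U j).Nonempty} := fun i hi => ⟨x, hi, hj⟩
  have := Set.ncard_le_ncard hsub (𝒞.overlapFin j)
  rw [sx, ← Set.ncard_eq_toFinset_card _ (memSet_finite 𝒞 x)]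
  exact this.trans (𝒞.overlapBound j)

lemma tsum_ind (𝒞 : ModCover X μ I) (g : I → X → ℝ≥0∞) (x : X) :
    ∑' i, (𝒞.U i).indicator (g i) x = ∑ i ∈ sx 𝒞 x, g i x := by
  rw [tsum_eq_sum (s := sx 𝒞 x) (fun i hi =>
    Set.indicator_of_notMem (fun h => hi (mem_sx.2 h)) _)]
  exact Finset.sum_congr rfl fun i hi => Set.indicator_of_mem (mem_sx.1 hi) _

lemma sum_rpow_le (s : Finset I) (t : I → ℝ≥0∞) {pt : ℝ} (hpt : 1 ≤ pt) {n : ℕ}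
    (hcard : s.card ≤ n) :
    (∑ i ∈ s, t i) ^ pt ≤ (n : ℝ≥0∞) ^ pt * ∑ i ∈ s, t i ^ pt := by
  have hpt0 : (0:ℝ) < pt := lt_of_lt_of_le zero_lt_one hpt
  rcases s.eq_empty_or_nonempty with rfl | hs
  · simp [ENNReal.zero_rpow_of_pos hpt0]
  obtain ⟨i₀, hi₀, hsup⟩ := Finset.exists_mem_eq_sup s hs t
  calc (∑ i ∈ s, t i) ^ pt ≤ ((s.card : ℝ≥0∞) * s.sup t) ^ pt := by
        refine ENNReal.rpow_le_rpow ?_ hpt0.le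
        have := Finset.sum_le_card_nsmul s t (s.sup t) fun i hi => Finset.le_sup hi
        rwa [nsmul_eq_mul] at this
    _ = (s.card : ℝ≥0∞) ^ pt * (s.sup t) ^ pt := ENNReal.mul_rpow_of_nonneg _ _ hpt0.le
    _ ≤ (n : ℝ≥0∞) ^ pt * ∑ i ∈ s, t i ^ pt := by
        refine mul_le_mul' (ENNReal.rpow_le_rpow (by exact_mod_cast hcard) hpt0.le) ?_
        rw [hsup]
        exact Finset.single_le_sum (f := fun i => t i ^ pt) (fun i _ => zero_le) hi₀

lemma sum_rpow_ge (s : Finset I) (t : I → ℝ≥0∞) {pt : ℝ} (hpt : 1 ≤ pt) :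
    ∑ i ∈ s, t i ^ pt ≤ (∑ i ∈ s, t i) ^ pt := by
  classical
  induction s using Finset.induction_on with
  | empty => simpa using zero_le
  | insert _ _ hnotmem ih =>
      rw [Finset.sum_insert hnotmem, Finset.sum_insert hnotmem]
      exact le_trans (add_le_add_right ih _) (ENNReal.add_rpow_le_rpow_add _ _ hpt)

lemma mw_comm (w : X → ℝ) (x y : X) : mw w x y = mw w y x := max_comm _ _

lemma ofReal_w_le {w : X → ℝ} (hwpos : ∀ x, 0 < w x) {Cm : ℝ} {x y : X} (h : mw w x y ≤ Cm) :
    ENNReal.ofReal (w x) ≤ ENNReal.ofReal Cm * ENNReal.ofReal (w y) := by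
  have hd : 0 < w x / w y := div_pos (hwpos x) (hwpos y)
  have hCm : 0 ≤ Cm := le_trans (le_trans hd.le (le_max_left _ _)) h
  have h2 : w x ≤ Cm * w y := by
    have h1 : w x / w y ≤ Cm := le_trans (le_max_left _ _) h
    have := (div_le_iff₀ (hwpos y)).mp h1
    linarith [this]
  calc ENNReal.ofReal (w x) ≤ ENNReal.ofReal (Cm * w y) := ENNReal.ofReal_le_ofReal h2
    _ = ENNReal.ofReal Cm * ENNReal.ofReal (w y) := ENNReal.ofReal_mul hCm

lemma inv_mul_le_one' (x : ℝ≥0∞) : x⁻¹ * x ≤ 1 := by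
  rcases eq_or_ne x 0 with rfl | h0
  · simp
  rcases eq_or_ne x ⊤ with rfl | htop
  · simp
  · rw [ENNReal.inv_mul_cancel h0 htop]

lemma inv_le_scaled {u v c : ℝ≥0∞} (hv0 : v ≠ 0) (hvtop : v ≠ ⊤) (h : v ≤ c * u) :
    u⁻¹ ≤ c * v⁻¹ := by
  rcases eq_or_ne u 0 with rfl | hu0
  · exact absurd (le_antisymm (by simpa using h) (zero_le)) hv0
  rcases eq_or_ne u ⊤ with rfl | hutop
  · simp
  calc u⁻¹ = v⁻¹ * v * u⁻¹ := by rw [ENNReal.inv_mul_cancel hv0 hvtop, one_mul]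
    _ ≤ v⁻¹ * (c * u) * u⁻¹ := by
        exact mul_le_mul_left (mul_le_mul_right h _) _
    _ = c * v⁻¹ * (u * u⁻¹) := by ring
    _ = c * v⁻¹ := by rw [ENNReal.mul_inv_cancel hu0 hutop, mul_one]

/-- The ENNReal-valued envelope function of a coefficient family over a covering. -/
def Fen (w : X → ℝ) (𝒞 : ModCover X μ I) (a : I → ℝ≥0∞) (x : X) : ℝ≥0∞ :=
  (∑' i, (𝒞.U i).indicator (fun _ => a i) x) * ENNReal.ofReal (w x)

section Estimates

variable {w : X → ℝ}

lemma indicator_meas (𝒞 : ModCover X μ I) (hw : Continuous w) [OpensMeasurableSpace X]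
    (c : ℝ≥0∞) {pt : ℝ} (i : I) :
    Measurable fun x => (𝒞.U i).indicator (fun y => (c * ENNReal.ofReal (w y)) ^ pt) x := by
  have hWm : Measurable fun y => ENNReal.ofReal (w y) :=
    ENNReal.measurable_ofReal.comp hw.measurable
  exact ((measurable_const.mul hWm).pow_const pt).indicator (𝒞.measU i)

lemma cover_upper [Countable I] [OpensMeasurableSpace X]
    (hw : Continuous w) (hwpos : ∀ x, 0 < w x)
    (𝒞 : ModCover X μ I) {Cm : ℝ}
    (hcover : ∀ i, ∀ x ∈ 𝒞.U i, ∀ y ∈ 𝒞.U i, mw w x y ≤ Cm)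
    {x_ : I → X} (hx : ∀ i, x_ i ∈ 𝒞.U i) (a : I → ℝ≥0∞) {pt : ℝ} (hpt : 1 ≤ pt) :
    ∫⁻ x, (Fen w 𝒞 a x) ^ pt ∂μ ≤
      (𝒞.N : ℝ≥0∞) ^ pt * ENNReal.ofReal Cm ^ pt *
        ∑' i, (a i * ENNReal.ofReal (w (x_ i))) ^ pt * μ (𝒞.U i) := by
  have hpt0 : (0:ℝ) ≤ pt := zero_le_one.trans hpt
  have hNtop : ((𝒞.N : ℝ≥0∞)) ^ pt ≠ ⊤ :=
    (ENNReal.rpow_lt_top_of_nonneg hpt0 (ENNReal.natCast_ne_top _)).ne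
  have key : ∀ x, (Fen w 𝒞 a x) ^ pt ≤ (𝒞.N : ℝ≥0∞) ^ pt *
      ∑' i, (𝒞.U i).indicator (fun y => (a i * ENNReal.ofReal (w y)) ^ pt) x := by
    intro x
    rw [Fen, tsum_ind, tsum_ind 𝒞 (fun i y => (a i * ENNReal.ofReal (w y)) ^ pt) x,
      Finset.sum_mul]
    exact sum_rpow_le _ _ hpt (card_sx_le 𝒞 x)
  have hIi : ∀ i, (∫⁻ x, (𝒞.U i).indicator (fun y => (a i * ENNReal.ofReal (w y)) ^ pt) x ∂μ)
      ≤ ENNReal.ofReal Cm ^ pt * ((a i * ENNReal.ofReal (w (x_ i))) ^ pt * μ (𝒞.U i)) := by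
    intro i
    have hmono : ∀ x, (𝒞.U i).indicator (fun y => (a i * ENNReal.ofReal (w y)) ^ pt) x ≤
        (𝒞.U i).indicator
          (fun _ => ENNReal.ofReal Cm ^ pt * (a i * ENNReal.ofReal (w (x_ i))) ^ pt) x := by
      intro x
      by_cases hx' : x ∈ 𝒞.U i
      · rw [Set.indicator_of_mem hx', Set.indicator_of_mem hx']
        have h2 : a i * ENNReal.ofReal (w x) ≤
            ENNReal.ofReal Cm * (a i * ENNReal.ofReal (w (x_ i))) := by
          calc a i * ENNReal.ofReal (w x)
              ≤ a i * (ENNReal.ofReal Cm * ENNReal.ofReal (w (x_ i))) :=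
                mul_le_mul_right (ofReal_w_le hwpos (hcover i x hx' (x_ i) (hx i))) _
            _ = ENNReal.ofReal Cm * (a i * ENNReal.ofReal (w (x_ i))) := by ring
        calc (a i * ENNReal.ofReal (w x)) ^ pt
            ≤ (ENNReal.ofReal Cm * (a i * ENNReal.ofReal (w (x_ i)))) ^ pt :=
              ENNReal.rpow_le_rpow h2 hpt0
          _ = ENNReal.ofReal Cm ^ pt * (a i * ENNReal.ofReal (w (x_ i))) ^ pt :=
              ENNReal.mul_rpow_of_nonneg _ _ hpt0
      · rw [Set.indicator_of_notMem hx', Set.indicator_of_notMem hx']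
    calc (∫⁻ x, (𝒞.U i).indicator (fun y => (a i * ENNReal.ofReal (w y)) ^ pt) x ∂μ)
        ≤ ∫⁻ x, (𝒞.U i).indicator
            (fun _ => ENNReal.ofReal Cm ^ pt * (a i * ENNReal.ofReal (w (x_ i))) ^ pt) x ∂μ :=
          lintegral_mono hmono
      _ = ENNReal.ofReal Cm ^ pt * (a i * ENNReal.ofReal (w (x_ i))) ^ pt * μ (𝒞.U i) :=
          lintegral_indicator_const (𝒞.measU i) _
      _ = ENNReal.ofReal Cm ^ pt * ((a i * ENNReal.ofReal (w (x_ i))) ^ pt * μ (𝒞.U i)) :=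
          mul_assoc _ _ _
  calc ∫⁻ x, (Fen w 𝒞 a x) ^ pt ∂μ
      ≤ ∫⁻ x, (𝒞.N : ℝ≥0∞) ^ pt *
          ∑' i, (𝒞.U i).indicator (fun y => (a i * ENNReal.ofReal (w y)) ^ pt) x ∂μ :=
        lintegral_mono key
    _ = (𝒞.N : ℝ≥0∞) ^ pt * ∫⁻ x,
          ∑' i, (𝒞.U i).indicator (fun y => (a i * ENNReal.ofReal (w y)) ^ pt) x ∂μ :=
        lintegral_const_mul' _ _ hNtop
    _ = (𝒞.N : ℝ≥0∞) ^ pt * ∑' i,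
          ∫⁻ x, (𝒞.U i).indicator (fun y => (a i * ENNReal.ofReal (w y)) ^ pt) x ∂μ := by
        rw [lintegral_tsum fun i => (indicator_meas 𝒞 hw (a i) i).aemeasurable]
    _ ≤ (𝒞.N : ℝ≥0∞) ^ pt * ∑' i,
          ENNReal.ofReal Cm ^ pt * ((a i * ENNReal.ofReal (w (x_ i))) ^ pt * μ (𝒞.U i)) :=
        mul_le_mul_right (ENNReal.tsum_le_tsum hIi) _
    _ = (𝒞.N : ℝ≥0∞) ^ pt * (ENNReal.ofReal Cm ^ pt *
          ∑' i, (a i * ENNReal.ofReal (w (x_ i))) ^ pt * μ (𝒞.U i)) := by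
        rw [ENNReal.tsum_mul_left]
    _ = (𝒞.N : ℝ≥0∞) ^ pt * ENNReal.ofReal Cm ^ pt *
          ∑' i, (a i * ENNReal.ofReal (w (x_ i))) ^ pt * μ (𝒞.U i) := (mul_assoc _ _ _).symm

lemma cover_lower [Countable I] [OpensMeasurableSpace X]
    (hw : Continuous w) (hwpos : ∀ x, 0 < w x)
    (𝒞 : ModCover X μ I) {Cm : ℝ}
    (hcover : ∀ i, ∀ x ∈ 𝒞.U i, ∀ y ∈ 𝒞.U i, mw w x y ≤ Cm)
    {x_ : I → X} (hx : ∀ i, x_ i ∈ 𝒞.U i) (a : I → ℝ≥0∞) {pt : ℝ} (hpt : 1 ≤ pt) :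
    ∑' i, (a i * ENNReal.ofReal (w (x_ i))) ^ pt * μ (𝒞.U i) ≤
      ENNReal.ofReal Cm ^ pt * ∫⁻ x, (Fen w 𝒞 a x) ^ pt ∂μ := by
  have hpt0 : (0:ℝ) ≤ pt := zero_le_one.trans hpt
  have hCmtop : (ENNReal.ofReal Cm) ^ pt ≠ ⊤ :=
    (ENNReal.rpow_lt_top_of_nonneg hpt0 ENNReal.ofReal_ne_top).ne
  have key : ∀ i, (a i * ENNReal.ofReal (w (x_ i))) ^ pt * μ (𝒞.U i) ≤
      ∫⁻ x, (𝒞.U i).indicator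
        (fun y => ENNReal.ofReal Cm ^ pt * (a i * ENNReal.ofReal (w y)) ^ pt) x ∂μ := by
    intro i
    rw [show (a i * ENNReal.ofReal (w (x_ i))) ^ pt * μ (𝒞.U i)
        = ∫⁻ x, (𝒞.U i).indicator (fun _ => (a i * ENNReal.ofReal (w (x_ i))) ^ pt) x ∂μ from
      (lintegral_indicator_const (𝒞.measU i) _).symm]
    refine lintegral_mono fun x => ?_
    by_cases hx' : x ∈ 𝒞.U i
    · rw [Set.indicator_of_mem hx', Set.indicator_of_mem hx']
      have h2 : a i * ENNReal.ofReal (w (x_ i)) ≤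
          ENNReal.ofReal Cm * (a i * ENNReal.ofReal (w x)) := by
        calc a i * ENNReal.ofReal (w (x_ i))
            ≤ a i * (ENNReal.ofReal Cm * ENNReal.ofReal (w x)) :=
              mul_le_mul_right (ofReal_w_le hwpos (hcover i (x_ i) (hx i) x hx')) _
          _ = ENNReal.ofReal Cm * (a i * ENNReal.ofReal (w x)) := by ring
      calc (a i * ENNReal.ofReal (w (x_ i))) ^ pt
          ≤ (ENNReal.ofReal Cm * (a i * ENNReal.ofReal (w x))) ^ pt :=
            ENNReal.rpow_le_rpow h2 hpt0
        _ = ENNReal.ofReal Cm ^ pt * (a i * ENNReal.ofReal (w x)) ^ pt :=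
            ENNReal.mul_rpow_of_nonneg _ _ hpt0
    · rw [Set.indicator_of_notMem hx', Set.indicator_of_notMem hx']
  have hmeas : ∀ i, AEMeasurable (fun x => (𝒞.U i).indicator
      (fun y => ENNReal.ofReal Cm ^ pt * (a i * ENNReal.ofReal (w y)) ^ pt) x) μ := by
    intro i
    have hWm : Measurable fun y => ENNReal.ofReal (w y) :=
      ENNReal.measurable_ofReal.comp hw.measurable
    exact ((measurable_const.mul ((measurable_const.mul hWm).pow_const pt)).indicator
      (𝒞.measU i)).aemeasurable
  calc ∑' i, (a i * ENNReal.ofReal (w (x_ i))) ^ pt * μ (𝒞.U i)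
      ≤ ∑' i, ∫⁻ x, (𝒞.U i).indicator
          (fun y => ENNReal.ofReal Cm ^ pt * (a i * ENNReal.ofReal (w y)) ^ pt) x ∂μ :=
        ENNReal.tsum_le_tsum key
    _ = ∫⁻ x, ∑' i, (𝒞.U i).indicator
          (fun y => ENNReal.ofReal Cm ^ pt * (a i * ENNReal.ofReal (w y)) ^ pt) x ∂μ :=
        (lintegral_tsum hmeas).symm
    _ ≤ ∫⁻ x, ENNReal.ofReal Cm ^ pt * (Fen w 𝒞 a x) ^ pt ∂μ := by
        refine lintegral_mono fun x => ?_
        rw [tsum_ind 𝒞 (fun i y => ENNReal.ofReal Cm ^ pt *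
          (a i * ENNReal.ofReal (w y)) ^ pt) x, ← Finset.mul_sum, Fen, tsum_ind]
        refine mul_le_mul_right ?_ _
        calc ∑ i ∈ sx 𝒞 x, (a i * ENNReal.ofReal (w x)) ^ pt
            ≤ (∑ i ∈ sx 𝒞 x, a i * ENNReal.ofReal (w x)) ^ pt := sum_rpow_ge _ _ hpt
          _ = ((∑ i ∈ sx 𝒞 x, a i) * ENNReal.ofReal (w x)) ^ pt := by
              rw [Finset.sum_mul]
    _ = ENNReal.ofReal Cm ^ pt * ∫⁻ x, (Fen w 𝒞 a x) ^ pt ∂μ :=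
        lintegral_const_mul' _ _ hCmtop

lemma cover_upper_top (hwpos : ∀ x, 0 < w x) (𝒞 : ModCover X μ I) {Cm : ℝ}
    (hcover : ∀ i, ∀ x ∈ 𝒞.U i, ∀ y ∈ 𝒞.U i, mw w x y ≤ Cm)
    {x_ : I → X} (hx : ∀ i, x_ i ∈ 𝒞.U i) (a : I → ℝ≥0∞) :
    essSup (Fen w 𝒞 a) μ ≤ (𝒞.N : ℝ≥0∞) * ENNReal.ofReal Cm *
      ⨆ i, a i * ENNReal.ofReal (w (x_ i)) := by
  refine essSup_le_of_ae_le _ (ae_of_all μ fun x => ?_)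
  rw [Fen, tsum_ind, Finset.sum_mul]
  calc ∑ i ∈ sx 𝒞 x, a i * ENNReal.ofReal (w x)
      ≤ (sx 𝒞 x).card • (ENNReal.ofReal Cm * ⨆ j, a j * ENNReal.ofReal (w (x_ j))) := by
        refine Finset.sum_le_card_nsmul _ _ _ fun i hi => ?_
        have hxU := mem_sx.1 hi
        calc a i * ENNReal.ofReal (w x)
            ≤ a i * (ENNReal.ofReal Cm * ENNReal.ofReal (w (x_ i))) :=
              mul_le_mul_right (ofReal_w_le hwpos (hcover i x hxU (x_ i) (hx i))) _
          _ = ENNReal.ofReal Cm * (a i * ENNReal.ofReal (w (x_ i))) := by ring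
          _ ≤ ENNReal.ofReal Cm * ⨆ j, a j * ENNReal.ofReal (w (x_ j)) :=
              mul_le_mul_right (le_iSup (fun j => a j * ENNReal.ofReal (w (x_ j))) i) _
    _ ≤ (𝒞.N : ℝ≥0∞) * (ENNReal.ofReal Cm * ⨆ j, a j * ENNReal.ofReal (w (x_ j))) := by
        rw [nsmul_eq_mul]
        exact mul_le_mul_left (by exact_mod_cast card_sx_le 𝒞 x) _
    _ = (𝒞.N : ℝ≥0∞) * ENNReal.ofReal Cm * ⨆ j, a j * ENNReal.ofReal (w (x_ j)) :=
        (mul_assoc _ _ _).symm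

lemma cover_lower_top (hwpos : ∀ x, 0 < w x) (𝒞 : ModCover X μ I) {Cm : ℝ}
    (hcover : ∀ i, ∀ x ∈ 𝒞.U i, ∀ y ∈ 𝒞.U i, mw w x y ≤ Cm)
    {x_ : I → X} (hx : ∀ i, x_ i ∈ 𝒞.U i) (a : I → ℝ≥0∞) :
    (⨆ i, a i * ENNReal.ofReal (w (x_ i))) ≤ ENNReal.ofReal Cm * essSup (Fen w 𝒞 a) μ := by
  refine iSup_le fun i => ?_
  set T := {x | Fen w 𝒞 a x ≤ essSup (Fen w 𝒞 a) μ} with hT_def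
  have hT : μ Tᶜ = 0 := by
    have h := ae_le_essSup (μ := μ) (Fen w 𝒞 a)
    rw [Filter.eventually_iff, MeasureTheory.mem_ae_iff] at h
    exact h
  have hne : (𝒞.U i ∩ T).Nonempty := by
    by_contra hemp
    rw [Set.not_nonempty_iff_eq_empty] at hemp
    have hsub : 𝒞.U i ⊆ Tᶜ := fun x hxU hxT =>
      Set.eq_empty_iff_forall_notMem.mp hemp x ⟨hxU, hxT⟩
    have h0 : μ (𝒞.U i) = 0 :=
      le_antisymm (le_trans (measure_mono hsub) hT.le) (zero_le)
    exact (lt_of_lt_of_le 𝒞.measLowerPos (𝒞.lower i)).ne' h0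
  obtain ⟨z, hzU, hzT⟩ := hne
  calc a i * ENNReal.ofReal (w (x_ i))
      ≤ a i * (ENNReal.ofReal Cm * ENNReal.ofReal (w z)) :=
        mul_le_mul_right (ofReal_w_le hwpos (hcover i (x_ i) (hx i) z hzU)) _
    _ = ENNReal.ofReal Cm * (a i * ENNReal.ofReal (w z)) := by ring
    _ ≤ ENNReal.ofReal Cm * Fen w 𝒞 a z := by
        refine mul_le_mul_right ?_ _
        rw [Fen]
        refine mul_le_mul_left ?_ _
        calc a i = (𝒞.U i).indicator (fun _ => a i) z := (Set.indicator_of_mem hzU (fun _ => a i)).symm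
          _ ≤ ∑' j, (𝒞.U j).indicator (fun _ => a j) z :=
            ENNReal.le_tsum i
    _ ≤ ENNReal.ofReal Cm * essSup (Fen w 𝒞 a) μ := mul_le_mul_right hzT _

lemma enorm_eq {w : X → ℝ} (hwpos : ∀ x, 0 < w x) (𝒞 : ModCover X μ I)
    {c : I → ℝ} (hc : ∀ i, 0 ≤ c i) (x : X) :
    ‖(∑' i, c i * (𝒞.U i).indicator (fun _ => (1:ℝ)) x) * w x‖ₑ =
      Fen w 𝒞 (fun i => ENNReal.ofReal (c i)) x := by
  have hsum : ∑' i, c i * (𝒞.U i).indicator (fun _ => (1:ℝ)) x = ∑ i ∈ sx 𝒞 x, c i := by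
    rw [tsum_eq_sum (s := sx 𝒞 x) (fun i hi => by
      rw [Set.indicator_of_notMem (fun h => hi (mem_sx.2 h)), mul_zero])]
    exact Finset.sum_congr rfl fun i hi => by
      rw [Set.indicator_of_mem (mem_sx.1 hi), mul_one]
  have hnn : (0:ℝ) ≤ ∑ i ∈ sx 𝒞 x, c i := Finset.sum_nonneg fun i _ => hc i
  rw [hsum, Real.enorm_eq_ofReal (mul_nonneg hnn (hwpos x).le), ENNReal.ofReal_mul hnn,
    Fen, tsum_ind 𝒞 (fun i _ => ENNReal.ofReal (c i)) x,
    ENNReal.ofReal_sum_of_nonneg fun i _ => hc i]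

/-- An `ENNReal`-level stand-in for the `L^p_w` norm of `∑ᵢ aᵢ χ_{Uᵢ}`. -/
def GN (μ : Measure X) (w : X → ℝ) (𝒞 : ModCover X μ I) (a : I → ℝ≥0∞) (p : ℝ≥0∞) : ℝ≥0∞ :=
  if p = ∞ then essSup (Fen w 𝒞 a) μ
  else (∫⁻ x, (Fen w 𝒞 a x) ^ p.toReal ∂μ) ^ (1 / p.toReal)

lemma eLpNorm_eq_GN {w : X → ℝ} (hwpos : ∀ x, 0 < w x) (𝒞 : ModCover X μ I)
    (c : I → ℝ) (hc : ∀ i, 0 ≤ c i) {p : ℝ≥0∞} (hp : p ≠ 0) :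
    eLpNorm (fun x => (∑' i, c i * (𝒞.U i).indicator (fun _ => (1:ℝ)) x) * w x) p μ =
      GN μ w 𝒞 (fun i => ENNReal.ofReal (c i)) p := by
  by_cases hps : p = ∞
  · subst hps
    rw [eLpNorm_exponent_top, eLpNormEssSup, GN, if_pos rfl]
    exact essSup_congr_ae (Filter.Eventually.of_forall fun x => enorm_eq hwpos 𝒞 hc x)
  · rw [eLpNorm_eq_lintegral_rpow_enorm_toReal hp hps, GN, if_neg hps]
    congr 1
    exact lintegral_congr fun x => by rw [enorm_eq hwpos 𝒞 hc x]

lemma oneside [Countable I] [OpensMeasurableSpace X] {w : X → ℝ}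
    (hw : Continuous w) (hwpos : ∀ x, 0 < w x)
    (𝒰 𝒱 : ModCover X μ I) {CmU CmV : ℝ}
    (hcoverU : ∀ i, ∀ x ∈ 𝒰.U i, ∀ y ∈ 𝒰.U i, mw w x y ≤ CmU)
    (hcoverV : ∀ i, ∀ x ∈ 𝒱.U i, ∀ y ∈ 𝒱.U i, mw w x y ≤ CmV)
    {x_ y_ : I → X} (hx : ∀ i, x_ i ∈ 𝒰.U i) (hy : ∀ i, y_ i ∈ 𝒱.U i)
    {p : ℝ≥0∞} (hp : 1 ≤ p)
    (K1 K2 : ℝ≥0∞) (hK1 : K1 ≠ ⊤) (hK2 : K2 ≠ ⊤)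
    (h2 : ∀ i, μ (𝒰.U i) ≤ K2 * μ (𝒱.U i)) :
    ∃ C : ℝ≥0∞, C ≠ ⊤ ∧ ∀ a b : I → ℝ≥0∞,
      (∀ i, a i * ENNReal.ofReal (w (x_ i)) ≤ K1 * (b i * ENNReal.ofReal (w (y_ i)))) →
      GN μ w 𝒰 a p ≤ C * GN μ w 𝒱 b p := by
  by_cases hps : p = ∞
  · subst hps
    refine ⟨(𝒰.N : ℝ≥0∞) * ENNReal.ofReal CmU * K1 * ENNReal.ofReal CmV, ?_, ?_⟩
    · exact ENNReal.mul_ne_top (ENNReal.mul_ne_top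
        (ENNReal.mul_ne_top (ENNReal.natCast_ne_top _) ENNReal.ofReal_ne_top) hK1)
        ENNReal.ofReal_ne_top
    intro a b h1
    rw [GN, GN, if_pos rfl, if_pos rfl]
    calc essSup (Fen w 𝒰 a) μ
        ≤ (𝒰.N : ℝ≥0∞) * ENNReal.ofReal CmU * ⨆ i, a i * ENNReal.ofReal (w (x_ i)) :=
          cover_upper_top hwpos 𝒰 hcoverU hx a
      _ ≤ (𝒰.N : ℝ≥0∞) * ENNReal.ofReal CmU *
            (K1 * ⨆ i, b i * ENNReal.ofReal (w (y_ i))) := by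
          refine mul_le_mul_right (iSup_le fun i => (h1 i).trans ?_) _
          exact mul_le_mul_right (le_iSup (fun j => b j * ENNReal.ofReal (w (y_ j))) i) _
      _ ≤ (𝒰.N : ℝ≥0∞) * ENNReal.ofReal CmU *
            (K1 * (ENNReal.ofReal CmV * essSup (Fen w 𝒱 b) μ)) := by
          exact mul_le_mul_right (mul_le_mul_right (cover_lower_top hwpos 𝒱 hcoverV hy b) _) _
      _ = (𝒰.N : ℝ≥0∞) * ENNReal.ofReal CmU * K1 * ENNReal.ofReal CmV *
            essSup (Fen w 𝒱 b) μ := by ring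
  · set pt := p.toReal with hpt_def
    have hpt : 1 ≤ pt := by
      rw [hpt_def, ← ENNReal.toReal_one]
      exact (ENNReal.toReal_le_toReal ENNReal.one_ne_top hps).mpr hp
    have hpt0 : (0:ℝ) ≤ pt := zero_le_one.trans hpt
    have h1pt : (0:ℝ) ≤ 1 / pt := by positivity
    set Ktot := (𝒰.N : ℝ≥0∞) ^ pt * ENNReal.ofReal CmU ^ pt * (K1 ^ pt * K2) *
      ENNReal.ofReal CmV ^ pt with hKtot_def
    have hKtot : Ktot ≠ ⊤ := by
      refine ENNReal.mul_ne_top (ENNReal.mul_ne_top (ENNReal.mul_ne_top ?_ ?_)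
        (ENNReal.mul_ne_top ?_ hK2)) ?_
      · exact (ENNReal.rpow_lt_top_of_nonneg hpt0 (ENNReal.natCast_ne_top _)).ne
      · exact (ENNReal.rpow_lt_top_of_nonneg hpt0 ENNReal.ofReal_ne_top).ne
      · exact (ENNReal.rpow_lt_top_of_nonneg hpt0 hK1).ne
      · exact (ENNReal.rpow_lt_top_of_nonneg hpt0 ENNReal.ofReal_ne_top).ne
    refine ⟨Ktot ^ (1/pt), (ENNReal.rpow_lt_top_of_nonneg h1pt hKtot).ne, ?_⟩
    intro a b h1
    have hmain : ∫⁻ x, (Fen w 𝒰 a x) ^ pt ∂μ ≤ Ktot * ∫⁻ x, (Fen w 𝒱 b x) ^ pt ∂μ := by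
      have hSUV : ∑' i, (a i * ENNReal.ofReal (w (x_ i))) ^ pt * μ (𝒰.U i) ≤
          K1 ^ pt * K2 * ∑' i, (b i * ENNReal.ofReal (w (y_ i))) ^ pt * μ (𝒱.U i) := by
        rw [← ENNReal.tsum_mul_left]
        refine ENNReal.tsum_le_tsum fun i => ?_
        calc (a i * ENNReal.ofReal (w (x_ i))) ^ pt * μ (𝒰.U i)
            ≤ (K1 * (b i * ENNReal.ofReal (w (y_ i)))) ^ pt * (K2 * μ (𝒱.U i)) :=
              mul_le_mul' (ENNReal.rpow_le_rpow (h1 i) hpt0) (h2 i)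
          _ = K1 ^ pt * K2 * ((b i * ENNReal.ofReal (w (y_ i))) ^ pt * μ (𝒱.U i)) := by
              rw [ENNReal.mul_rpow_of_nonneg _ _ hpt0]; ring
      calc ∫⁻ x, (Fen w 𝒰 a x) ^ pt ∂μ
          ≤ (𝒰.N : ℝ≥0∞) ^ pt * ENNReal.ofReal CmU ^ pt *
              ∑' i, (a i * ENNReal.ofReal (w (x_ i))) ^ pt * μ (𝒰.U i) :=
            cover_upper hw hwpos 𝒰 hcoverU hx a hpt
        _ ≤ (𝒰.N : ℝ≥0∞) ^ pt * ENNReal.ofReal CmU ^ pt *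
              (K1 ^ pt * K2 * ∑' i, (b i * ENNReal.ofReal (w (y_ i))) ^ pt * μ (𝒱.U i)) :=
            mul_le_mul_right hSUV _
        _ ≤ (𝒰.N : ℝ≥0∞) ^ pt * ENNReal.ofReal CmU ^ pt *
              (K1 ^ pt * K2 * (ENNReal.ofReal CmV ^ pt * ∫⁻ x, (Fen w 𝒱 b x) ^ pt ∂μ)) :=
            mul_le_mul_right (mul_le_mul_right
              (cover_lower hw hwpos 𝒱 hcoverV hy b hpt) _) _
        _ = Ktot * ∫⁻ x, (Fen w 𝒱 b x) ^ pt ∂μ := by rw [hKtot_def]; ring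
    rw [GN, GN, if_neg hps, if_neg hps]
    calc (∫⁻ x, (Fen w 𝒰 a x) ^ pt ∂μ) ^ (1/pt)
        ≤ (Ktot * ∫⁻ x, (Fen w 𝒱 b x) ^ pt ∂μ) ^ (1/pt) := ENNReal.rpow_le_rpow hmain h1pt
      _ = Ktot ^ (1/pt) * ((∫⁻ x, (Fen w 𝒱 b x) ^ pt ∂μ)) ^ (1/pt) :=
          ENNReal.mul_rpow_of_nonneg _ _ h1pt

end Estimates

lemma lower_of (D A B : ℝ≥0∞) (h : B ≤ D * A) : D⁻¹ * B ≤ A :=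
  calc D⁻¹ * B ≤ D⁻¹ * (D * A) := mul_le_mul_right h _
    _ = (D⁻¹ * D) * A := (mul_assoc _ _ _).symm
    _ ≤ 1 * A := mul_le_mul_left (inv_mul_le_one' D) _
    _ = A := one_mul _

end MEqCov

/-- `m`-equivalent moderate admissible coverings over the same index set
produce the same sequence spaces `Y^♭` and `Y^♮` (for `Y = L^p_w`) with equivalent norms. -/
theorem m_equivalent_coverings_same_sequence_spaces
    {X : Type*} [TopologicalSpace X] [T2Space X] [LocallyCompactSpace X]
    [SigmaCompactSpace X] [MeasurableSpace X] [BorelSpace X]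
    (μ : MeasureTheory.Measure X) [μ.Regular] [μ.IsOpenPosMeasure]
    {I : Type*} [Countable I]
    (𝒰 𝒱 : ModCover X μ I)
    (w : X → ℝ) (hw : Continuous w) (hwpos : ∀ x, 0 < w x)
    -- both coverings satisfy the `m_w`-cover condition
    (CmU : ℝ) (hcoverU : ∀ i, ∀ x ∈ 𝒰.U i, ∀ y ∈ 𝒰.U i, mw w x y ≤ CmU)
    (CmV : ℝ) (hcoverV : ∀ i, ∀ x ∈ 𝒱.U i, ∀ y ∈ 𝒱.U i, mw w x y ≤ CmV)
    -- (i) comparable measures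
    (Cl Cu : ℝ≥0∞) (hClpos : 0 < Cl) (hCufin : Cu < ⊤)
    (hcomp : ∀ i, Cl * μ (𝒰.U i) ≤ μ (𝒱.U i) ∧ μ (𝒱.U i) ≤ Cu * μ (𝒰.U i))
    -- (ii) uniformly `m`-close coverings
    (C' : ℝ) (hclose : ∀ i, ∀ x ∈ 𝒰.U i, ∀ y ∈ 𝒱.U i, mw w x y ≤ C') :
    ∀ p : ℝ≥0∞, 1 ≤ p →
      ∃ c C : ℝ≥0∞, 0 < c ∧ C < ⊤ ∧
        ∀ lam : I → ℝ, (∀ i, 0 ≤ lam i) →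
          (c * MeasureTheory.eLpNorm
              (fun x => (∑' i, lam i * (𝒱.U i).indicator (fun _ => (1 : ℝ)) x) * w x) p μ ≤
            MeasureTheory.eLpNorm
              (fun x => (∑' i, lam i * (𝒰.U i).indicator (fun _ => (1 : ℝ)) x) * w x) p μ ∧
            MeasureTheory.eLpNorm
              (fun x => (∑' i, lam i * (𝒰.U i).indicator (fun _ => (1 : ℝ)) x) * w x) p μ ≤
            C * MeasureTheory.eLpNorm
              (fun x => (∑' i, lam i * (𝒱.U i).indicator (fun _ => (1 : ℝ)) x) * w x) p μ) ∧
          (c * MeasureTheory.eLpNorm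
              (fun x => (∑' i, lam i * (μ (𝒱.U i)).toReal⁻¹ *
                  (𝒱.U i).indicator (fun _ => (1 : ℝ)) x) * w x) p μ ≤
            MeasureTheory.eLpNorm
              (fun x => (∑' i, lam i * (μ (𝒰.U i)).toReal⁻¹ *
                  (𝒰.U i).indicator (fun _ => (1 : ℝ)) x) * w x) p μ ∧
            MeasureTheory.eLpNorm
              (fun x => (∑' i, lam i * (μ (𝒰.U i)).toReal⁻¹ *
                  (𝒰.U i).indicator (fun _ => (1 : ℝ)) x) * w x) p μ ≤
            C * MeasureTheory.eLpNorm
              (fun x => (∑' i, lam i * (μ (𝒱.U i)).toReal⁻¹ *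
                  (𝒱.U i).indicator (fun _ => (1 : ℝ)) x) * w x) p μ) := by
  classical
  intro p hp
  have hp0 : p ≠ 0 := (lt_of_lt_of_le zero_lt_one hp).ne'
  -- base points of the two coverings
  set x_ : I → X := fun i => (𝒰.interiorNonempty i).choose with hx_def
  have hx : ∀ i, x_ i ∈ 𝒰.U i := fun i => interior_subset (𝒰.interiorNonempty i).choose_spec
  set y_ : I → X := fun i => (𝒱.interiorNonempty i).choose with hy_def
  have hy : ∀ i, y_ i ∈ 𝒱.U i := fun i => interior_subset (𝒱.interiorNonempty i).choose_spec
  -- measure facts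
  have hU0 : ∀ i, μ (𝒰.U i) ≠ 0 := fun i => (lt_of_lt_of_le 𝒰.measLowerPos (𝒰.lower i)).ne'
  have hUtop : ∀ i, μ (𝒰.U i) ≠ ⊤ := fun i => (𝒰.finiteMeas i).ne
  have hV0 : ∀ i, μ (𝒱.U i) ≠ 0 := fun i => (lt_of_lt_of_le 𝒱.measLowerPos (𝒱.lower i)).ne'
  have hVtop : ∀ i, μ (𝒱.U i) ≠ ⊤ := fun i => (𝒱.finiteMeas i).ne
  set Cl' : ℝ≥0∞ := min Cl 1 with hCl'_def
  have hCl'0 : Cl' ≠ 0 := (lt_min hClpos zero_lt_one).ne'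
  have hCl'top : Cl' ≠ ⊤ := ((min_le_right _ _).trans_lt ENNReal.one_lt_top).ne
  have hClinvtop : Cl'⁻¹ ≠ ⊤ := ENNReal.inv_ne_top.mpr hCl'0
  have h2UV : ∀ i, μ (𝒰.U i) ≤ Cl'⁻¹ * μ (𝒱.U i) := by
    intro i
    have h' : Cl' * μ (𝒰.U i) ≤ μ (𝒱.U i) :=
      le_trans (mul_le_mul_left (min_le_left _ _) _) (hcomp i).1
    calc μ (𝒰.U i) = Cl'⁻¹ * Cl' * μ (𝒰.U i) := by
          rw [ENNReal.inv_mul_cancel hCl'0 hCl'top, one_mul]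
      _ = Cl'⁻¹ * (Cl' * μ (𝒰.U i)) := mul_assoc _ _ _
      _ ≤ Cl'⁻¹ * μ (𝒱.U i) := mul_le_mul_right h' _
  have h2VU : ∀ i, μ (𝒱.U i) ≤ Cu * μ (𝒰.U i) := fun i => (hcomp i).2
  -- weight comparisons at the base points
  have hWxy : ∀ i, ENNReal.ofReal (w (x_ i)) ≤
      ENNReal.ofReal C' * ENNReal.ofReal (w (y_ i)) :=
    fun i => MEqCov.ofReal_w_le hwpos (hclose i _ (hx i) _ (hy i))
  have hWyx : ∀ i, ENNReal.ofReal (w (y_ i)) ≤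
      ENNReal.ofReal C' * ENNReal.ofReal (w (x_ i)) :=
    fun i => MEqCov.ofReal_w_le hwpos
      (by rw [MEqCov.mw_comm]; exact hclose i _ (hx i) _ (hy i))
  -- inverse measure comparisons
  have hinvU : ∀ i, (μ (𝒰.U i))⁻¹ ≤ Cu * (μ (𝒱.U i))⁻¹ :=
    fun i => MEqCov.inv_le_scaled (hV0 i) (hVtop i) (h2VU i)
  have hinvV : ∀ i, (μ (𝒱.U i))⁻¹ ≤ Cl'⁻¹ * (μ (𝒰.U i))⁻¹ :=
    fun i => MEqCov.inv_le_scaled (hU0 i) (hUtop i) (h2UV i)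
  -- the four one-sided comparisons
  obtain ⟨C1, hC1top, hC1⟩ := MEqCov.oneside hw hwpos 𝒰 𝒱 hcoverU hcoverV hx hy hp
    (ENNReal.ofReal C') Cl'⁻¹ ENNReal.ofReal_ne_top hClinvtop h2UV
  obtain ⟨C2, hC2top, hC2⟩ := MEqCov.oneside hw hwpos 𝒱 𝒰 hcoverV hcoverU hy hx hp
    (ENNReal.ofReal C') Cu ENNReal.ofReal_ne_top hCufin.ne h2VU
  obtain ⟨C3, hC3top, hC3⟩ := MEqCov.oneside hw hwpos 𝒰 𝒱 hcoverU hcoverV hx hy hp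
    (Cu * ENNReal.ofReal C') Cl'⁻¹ (ENNReal.mul_ne_top hCufin.ne ENNReal.ofReal_ne_top)
    hClinvtop h2UV
  obtain ⟨C4, hC4top, hC4⟩ := MEqCov.oneside hw hwpos 𝒱 𝒰 hcoverV hcoverU hy hx hp
    (Cl'⁻¹ * ENNReal.ofReal C') Cu (ENNReal.mul_ne_top hClinvtop ENNReal.ofReal_ne_top)
    hCufin.ne h2VU
  refine ⟨(max C2 C4)⁻¹, max C1 C3, ?_, ?_, ?_⟩
  · exact ENNReal.inv_pos.mpr (max_lt hC2top.lt_top hC4top.lt_top).ne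
  · exact max_lt hC1top.lt_top hC3top.lt_top
  intro lam hlam
  -- coefficient families
  set aU1 : I → ℝ≥0∞ := fun i => ENNReal.ofReal (lam i) with haU1_def
  set aU2 : I → ℝ≥0∞ := fun i => ENNReal.ofReal (lam i * (μ (𝒰.U i)).toReal⁻¹) with haU2_def
  set aV2 : I → ℝ≥0∞ := fun i => ENNReal.ofReal (lam i * (μ (𝒱.U i)).toReal⁻¹) with haV2_def
  have haU2 : ∀ i, aU2 i = ENNReal.ofReal (lam i) * (μ (𝒰.U i))⁻¹ := by
    intro i
    simp only [haU2_def]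
    rw [ENNReal.ofReal_mul (hlam i), ← ENNReal.toReal_inv,
      ENNReal.ofReal_toReal (ENNReal.inv_ne_top.mpr (hU0 i))]
  have haV2 : ∀ i, aV2 i = ENNReal.ofReal (lam i) * (μ (𝒱.U i))⁻¹ := by
    intro i
    simp only [haV2_def]
    rw [ENNReal.ofReal_mul (hlam i), ← ENNReal.toReal_inv,
      ENNReal.ofReal_toReal (ENNReal.inv_ne_top.mpr (hV0 i))]
  -- rewrite the four eLpNorms as GN's
  have hEqU1 : MeasureTheory.eLpNorm
      (fun x => (∑' i, lam i * (𝒰.U i).indicator (fun _ => (1 : ℝ)) x) * w x) p μ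
      = MEqCov.GN μ w 𝒰 aU1 p :=
    MEqCov.eLpNorm_eq_GN hwpos 𝒰 lam hlam hp0
  have hEqV1 : MeasureTheory.eLpNorm
      (fun x => (∑' i, lam i * (𝒱.U i).indicator (fun _ => (1 : ℝ)) x) * w x) p μ
      = MEqCov.GN μ w 𝒱 aU1 p :=
    MEqCov.eLpNorm_eq_GN hwpos 𝒱 lam hlam hp0
  have hEqU2 : MeasureTheory.eLpNorm
      (fun x => (∑' i, lam i * (μ (𝒰.U i)).toReal⁻¹ *
          (𝒰.U i).indicator (fun _ => (1 : ℝ)) x) * w x) p μ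
      = MEqCov.GN μ w 𝒰 aU2 p :=
    MEqCov.eLpNorm_eq_GN hwpos 𝒰 (fun i => lam i * (μ (𝒰.U i)).toReal⁻¹)
      (fun i => mul_nonneg (hlam i) (inv_nonneg.mpr ENNReal.toReal_nonneg)) hp0
  have hEqV2 : MeasureTheory.eLpNorm
      (fun x => (∑' i, lam i * (μ (𝒱.U i)).toReal⁻¹ *
          (𝒱.U i).indicator (fun _ => (1 : ℝ)) x) * w x) p μ
      = MEqCov.GN μ w 𝒱 aV2 p :=
    MEqCov.eLpNorm_eq_GN hwpos 𝒱 (fun i => lam i * (μ (𝒱.U i)).toReal⁻¹)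
      (fun i => mul_nonneg (hlam i) (inv_nonneg.mpr ENNReal.toReal_nonneg)) hp0
  rw [hEqU1, hEqV1, hEqU2, hEqV2]
  -- the coefficient comparison hypotheses
  have h1UV1 : ∀ i, aU1 i * ENNReal.ofReal (w (x_ i)) ≤
      ENNReal.ofReal C' * (aU1 i * ENNReal.ofReal (w (y_ i))) := by
    intro i
    calc aU1 i * ENNReal.ofReal (w (x_ i))
        ≤ aU1 i * (ENNReal.ofReal C' * ENNReal.ofReal (w (y_ i))) :=
          mul_le_mul_right (hWxy i) _
      _ = ENNReal.ofReal C' * (aU1 i * ENNReal.ofReal (w (y_ i))) := by ring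
  have h1VU1 : ∀ i, aU1 i * ENNReal.ofReal (w (y_ i)) ≤
      ENNReal.ofReal C' * (aU1 i * ENNReal.ofReal (w (x_ i))) := by
    intro i
    calc aU1 i * ENNReal.ofReal (w (y_ i))
        ≤ aU1 i * (ENNReal.ofReal C' * ENNReal.ofReal (w (x_ i))) :=
          mul_le_mul_right (hWyx i) _
      _ = ENNReal.ofReal C' * (aU1 i * ENNReal.ofReal (w (x_ i))) := by ring
  have h1UV2 : ∀ i, aU2 i * ENNReal.ofReal (w (x_ i)) ≤
      Cu * ENNReal.ofReal C' * (aV2 i * ENNReal.ofReal (w (y_ i))) := by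
    intro i
    rw [haU2 i, haV2 i]
    calc ENNReal.ofReal (lam i) * (μ (𝒰.U i))⁻¹ * ENNReal.ofReal (w (x_ i))
        ≤ ENNReal.ofReal (lam i) * (Cu * (μ (𝒱.U i))⁻¹) *
            (ENNReal.ofReal C' * ENNReal.ofReal (w (y_ i))) :=
          mul_le_mul' (mul_le_mul_right (hinvU i) _) (hWxy i)
      _ = Cu * ENNReal.ofReal C' *
            (ENNReal.ofReal (lam i) * (μ (𝒱.U i))⁻¹ * ENNReal.ofReal (w (y_ i))) := by ring
  have h1VU2 : ∀ i, aV2 i * ENNReal.ofReal (w (y_ i)) ≤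
      Cl'⁻¹ * ENNReal.ofReal C' * (aU2 i * ENNReal.ofReal (w (x_ i))) := by
    intro i
    rw [haU2 i, haV2 i]
    calc ENNReal.ofReal (lam i) * (μ (𝒱.U i))⁻¹ * ENNReal.ofReal (w (y_ i))
        ≤ ENNReal.ofReal (lam i) * (Cl'⁻¹ * (μ (𝒰.U i))⁻¹) *
            (ENNReal.ofReal C' * ENNReal.ofReal (w (x_ i))) :=
          mul_le_mul' (mul_le_mul_right (hinvV i) _) (hWyx i)
      _ = Cl'⁻¹ * ENNReal.ofReal C' *
            (ENNReal.ofReal (lam i) * (μ (𝒰.U i))⁻¹ * ENNReal.ofReal (w (x_ i))) := by ring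
  refine ⟨⟨?_, ?_⟩, ⟨?_, ?_⟩⟩
  · exact MEqCov.lower_of _ _ _ (le_trans (hC2 aU1 aU1 h1VU1)
      (mul_le_mul_left (le_max_left _ _) _))
  · exact le_trans (hC1 aU1 aU1 h1UV1) (mul_le_mul_left (le_max_left _ _) _)
  · exact MEqCov.lower_of _ _ _ (le_trans (hC4 aV2 aU2 h1VU2)
      (mul_le_mul_left (le_max_right _ _) _))
  · exact le_trans (hC3 aU2 aV2 h1UV2) (mul_le_mul_left (le_max_right _ _) _)
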